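/- arXiv:2112.01239 — 3 statements merged into one kernel-verified Lean document; each statement's English description precedes it below -/
import Mathlib

section
/- For every t ≥ 0, the expected transient net reward of the instructor computed in the original chain equals the c-weighted sum of her expected transient net rewards in the n lumped chains: ∑_{x ∈ S} R^I(x) · π^t(x) = ∑_{i=1}^{n} c_i · ∑_{a=0}^{M} (a·δ^{ln μ} − β) · π̄ᵢ^t(a). -/
open scoped BigOperators

noncomputable def Qoff (n M : ℕ) (lam : Fin n → ℝ) (mu : ℝ)
    (x y : Fin n → Fin (M+1)) : ℝ :=
  (∑ j : Fin n,
      if (y j : ℕ) = (x j : ℕ) + 1 ∧ (∀ k, k ≠ j → y k = x k) then lam j else 0)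
  + (if y = (fun _ => 0) ∧ x ≠ (fun _ => 0) then mu else 0)

noncomputable def Qgen (n M : ℕ) (lam : Fin n → ℝ) (mu : ℝ)
    (x y : Fin n → Fin (M+1)) : ℝ :=
  if x = y then -∑ z ∈ Finset.univ.erase x, Qoff n M lam mu x z
  else Qoff n M lam mu x y

noncomputable def QbarOff (M : ℕ) (lam mu : ℝ) (a b : Fin (M+1)) : ℝ :=
  (if (b : ℕ) = (a : ℕ) + 1 then lam else 0) + (if b = 0 ∧ a ≠ 0 then mu else 0)

noncomputable def Qbar (M : ℕ) (lam mu : ℝ) (a b : Fin (M+1)) : ℝ :=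
  if a = b then -∑ c ∈ Finset.univ.erase a, QbarOff M lam mu a c
  else QbarOff M lam mu a b

noncomputable def Pmat (n M : ℕ) (lam : Fin n → ℝ) (mu qhat : ℝ) :
    Matrix (Fin n → Fin (M+1)) (Fin n → Fin (M+1)) ℝ :=
  1 + qhat⁻¹ • Matrix.of (Qgen n M lam mu)

noncomputable def PbarMat (M : ℕ) (lam mu qhat : ℝ) :
    Matrix (Fin (M+1)) (Fin (M+1)) ℝ :=
  1 + qhat⁻¹ • Matrix.of (Qbar M lam mu)

noncomputable def delta0 (n M : ℕ) : (Fin n → Fin (M+1)) → ℝ :=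
  fun x => if x = (fun _ => 0) then 1 else 0

noncomputable def delta0bar (M : ℕ) : Fin (M+1) → ℝ :=
  fun a => if a = 0 then 1 else 0

noncomputable def transientP (n M : ℕ) (lam : Fin n → ℝ) (mu qhat t : ℝ)
    (x : Fin n → Fin (M+1)) : ℝ :=
  ∑' k : ℕ, Real.exp (-(qhat * t)) * (qhat * t) ^ k / (Nat.factorial k) *
    Matrix.vecMul (delta0 n M) ((Pmat n M lam mu qhat) ^ k) x

noncomputable def transientPbar (M : ℕ) (lam mu qhat t : ℝ) (a : Fin (M+1)) : ℝ :=
  ∑' k : ℕ, Real.exp (-(qhat * t)) * (qhat * t) ^ k / (Nat.factorial k) *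
    Matrix.vecMul (delta0bar M) ((PbarMat M lam mu qhat) ^ k) a

open Finset

noncomputable def upd {n M : ℕ} (x : Fin n → Fin (M+1)) (j : Fin n) : Fin n → Fin (M+1) :=
  Function.update x j (if h : (x j : ℕ) < M then ⟨(x j : ℕ)+1, by omega⟩ else 0)

lemma cond_iff {n M : ℕ} (x y : Fin n → Fin (M+1)) (j : Fin n) :
    ((y j : ℕ) = (x j : ℕ) + 1 ∧ ∀ k, k ≠ j → y k = x k) ↔
    ((x j : ℕ) < M ∧ y = upd x j) := by
  constructor
  · rintro ⟨h1, h2⟩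
    have hlt : (x j : ℕ) < M := by have := (y j).isLt; omega
    refine ⟨hlt, funext fun k => ?_⟩
    rcases eq_or_ne k j with rfl | hk
    · simp [upd, Function.update_self, hlt, Fin.ext_iff, h1]
    · simp [upd, Function.update_of_ne hk, h2 k hk]
  · rintro ⟨hlt, rfl⟩
    refine ⟨by simp [upd, Function.update_self, hlt], fun k hk => by
      simp [upd, Function.update_of_ne hk]⟩

lemma sum_cond_fiber {n M : ℕ} (lamj : ℝ) (i j : Fin n) (x : Fin n → Fin (M+1)) (b : Fin (M+1)) :
    ∑ y ∈ univ.filter (fun y : Fin n → Fin (M+1) => y i = b),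
      (if (y j : ℕ) = (x j : ℕ) + 1 ∧ (∀ k, k ≠ j → y k = x k) then lamj else 0)
    = if ((x j : ℕ) < M ∧ upd x j i = b) then lamj else 0 := by
  have : ∀ y : Fin n → Fin (M+1),
      (if (y j : ℕ) = (x j : ℕ) + 1 ∧ (∀ k, k ≠ j → y k = x k) then lamj else 0)
      = if ((x j : ℕ) < M ∧ y = upd x j) then lamj else 0 := by
    intro y; rw [if_congr (cond_iff x y j) rfl rfl]
  simp_rw [this]
  by_cases hlt : (x j : ℕ) < M
  · simp only [hlt, true_and]
    rw [Finset.sum_ite_eq' (univ.filter (fun y : Fin n → Fin (M+1) => y i = b)) (upd x j) (fun _ => lamj)]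
    simp [Finset.mem_filter]
  · simp [hlt]

lemma sum_cond_total {n M : ℕ} (lamj : ℝ) (j : Fin n) (x : Fin n → Fin (M+1)) :
    ∑ y : Fin n → Fin (M+1),
      (if (y j : ℕ) = (x j : ℕ) + 1 ∧ (∀ k, k ≠ j → y k = x k) then lamj else 0)
    = if (x j : ℕ) < M then lamj else 0 := by
  have : ∀ y : Fin n → Fin (M+1),
      (if (y j : ℕ) = (x j : ℕ) + 1 ∧ (∀ k, k ≠ j → y k = x k) then lamj else 0)
      = if ((x j : ℕ) < M ∧ y = upd x j) then lamj else 0 := by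
    intro y; rw [if_congr (cond_iff x y j) rfl rfl]
  simp_rw [this]
  by_cases hlt : (x j : ℕ) < M
  · simp only [hlt, true_and]
    rw [Finset.sum_ite_eq' univ (upd x j) (fun _ => lamj)]
    simp
  · simp [hlt]

lemma sum_mu_fiber {n M : ℕ} (mu : ℝ) (i : Fin n) (x : Fin n → Fin (M+1)) (b : Fin (M+1)) :
    ∑ y ∈ univ.filter (fun y : Fin n → Fin (M+1) => y i = b),
      (if y = (fun _ => 0) ∧ x ≠ (fun _ => 0) then mu else 0)
    = if b = 0 ∧ x ≠ (fun _ => 0) then mu else 0 := by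
  by_cases hx : x = (fun _ => 0)
  · subst hx; simp
  · simp only [ne_eq, hx, not_false_eq_true, and_true]
    rw [Finset.sum_ite_eq' (univ.filter (fun y : Fin n → Fin (M+1) => y i = b))
      (fun _ => 0) (fun _ => mu)]
    simp [Finset.mem_filter, eq_comm]

lemma sum_mu_total {n M : ℕ} (mu : ℝ) (x : Fin n → Fin (M+1)) :
    ∑ y : Fin n → Fin (M+1),
      (if y = (fun _ => 0) ∧ x ≠ (fun _ => 0) then mu else 0)
    = if x ≠ (fun _ => 0) then mu else 0 := by
  by_cases hx : x = (fun _ => 0)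
  · subst hx; simp
  · simp only [ne_eq, hx, not_false_eq_true, and_true, if_true]
    rw [Finset.sum_ite_eq' univ (fun _ => 0) (fun _ => mu)]
    simp

lemma Qoff_self {n M : ℕ} (lam : Fin n → ℝ) (mu : ℝ) (x : Fin n → Fin (M+1)) :
    Qoff n M lam mu x x = 0 := by
  unfold Qoff
  have h1 : ∀ j : Fin n,
      (if (x j : ℕ) = (x j : ℕ) + 1 ∧ (∀ k, k ≠ j → x k = x k) then lam j else 0) = 0 := by
    intro j; simp
  simp [h1]

lemma Qgen_eq {n M : ℕ} (lam : Fin n → ℝ) (mu : ℝ) (x y : Fin n → Fin (M+1)) :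
    Qgen n M lam mu x y = Qoff n M lam mu x y +
      (if x = y then -(∑ z : Fin n → Fin (M+1), Qoff n M lam mu x z) else 0) := by
  have hsum : ∑ z ∈ Finset.univ.erase x, Qoff n M lam mu x z
      = ∑ z : Fin n → Fin (M+1), Qoff n M lam mu x z := by
    rw [Finset.sum_erase_eq_sub (Finset.mem_univ x), Qoff_self, sub_zero]
  unfold Qgen
  rcases eq_or_ne x y with rfl | h
  · simp [hsum, Qoff_self]
  · simp [h]

lemma sum_succ_eq {M : ℕ} (l : ℝ) (a : Fin (M+1)) :
    ∑ c : Fin (M+1), (if (c : ℕ) = (a : ℕ) + 1 then l else 0)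
    = if (a : ℕ) < M then l else 0 := by
  by_cases hlt : (a : ℕ) < M
  · have : ∀ c : Fin (M+1), ((c : ℕ) = (a : ℕ) + 1) ↔ c = (⟨(a:ℕ)+1, by omega⟩ : Fin (M+1)) := by
      intro c; rw [Fin.ext_iff]
    simp_rw [this]
    rw [Finset.sum_ite_eq' Finset.univ _ (fun _ => l)]
    simp [hlt]
  · have : ∀ c : Fin (M+1), ((c : ℕ) = (a : ℕ) + 1) ↔ False := by
      intro c; constructor
      · intro h; have := c.isLt; omega
      · exact False.elim
    simp_rw [this]
    simp [hlt]

lemma Qbar_diag {M : ℕ} (l mu : ℝ) (a : Fin (M+1)) :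
    Qbar M l mu a a = -((if (a : ℕ) < M then l else 0) + (if a ≠ 0 then mu else 0)) := by
  have hself : QbarOff M l mu a a = 0 := by
    unfold QbarOff; simp
  have hsum : ∑ c ∈ Finset.univ.erase a, QbarOff M l mu a c
      = ∑ c : Fin (M+1), QbarOff M l mu a c := by
    rw [Finset.sum_erase_eq_sub (Finset.mem_univ a), hself, sub_zero]
  unfold Qbar
  simp only [if_pos rfl, hsum]
  unfold QbarOff
  rw [Finset.sum_add_distrib, sum_succ_eq]
  by_cases ha : a = 0
  · simp [ha]
  · simp only [ne_eq, ha, not_false_eq_true, and_true, if_true]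
    rw [Finset.sum_ite_eq' Finset.univ (0 : Fin (M+1)) (fun _ => mu)]
    simp

lemma Qgen_fiber_sum {n M : ℕ} (lam : Fin n → ℝ) (mu : ℝ) (i : Fin n)
    (x : Fin n → Fin (M+1)) (b : Fin (M+1)) :
    ∑ y ∈ Finset.univ.filter (fun y : Fin n → Fin (M+1) => y i = b),
      Qgen n M lam mu x y = Qbar M (lam i) mu (x i) b := by
  classical
  set D : ℝ := ∑ z : Fin n → Fin (M+1), Qoff n M lam mu x z with hD
  -- fiber sum of Qgen
  have step1 : ∑ y ∈ Finset.univ.filter (fun y : Fin n → Fin (M+1) => y i = b),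
      Qgen n M lam mu x y
      = (∑ y ∈ Finset.univ.filter (fun y : Fin n → Fin (M+1) => y i = b),
          Qoff n M lam mu x y) + (if x i = b then -D else 0) := by
    simp_rw [Qgen_eq lam mu x]
    rw [Finset.sum_add_distrib]
    congr 1
    rw [Finset.sum_ite_eq (Finset.univ.filter (fun y : Fin n → Fin (M+1) => y i = b))
      x (fun _ => -D)]
    simp [Finset.mem_filter]
  -- fiber sum of Qoff
  have step2 : ∑ y ∈ Finset.univ.filter (fun y : Fin n → Fin (M+1) => y i = b),
      Qoff n M lam mu x y
      = (∑ j : Fin n, if ((x j : ℕ) < M ∧ upd x j i = b) then lam j else 0)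
        + (if b = 0 ∧ x ≠ (fun _ => 0) then mu else 0) := by
    unfold Qoff
    rw [Finset.sum_add_distrib, sum_mu_fiber]
    congr 1
    rw [Finset.sum_comm]
    exact Finset.sum_congr rfl fun j _ => sum_cond_fiber (lam j) i j x b
  -- total sum of Qoff
  have step3 : D = (∑ j : Fin n, if (x j : ℕ) < M then lam j else 0)
      + (if x ≠ (fun _ => 0) then mu else 0) := by
    rw [hD]; unfold Qoff
    rw [Finset.sum_add_distrib, sum_mu_total]
    congr 1
    rw [Finset.sum_comm]
    exact Finset.sum_congr rfl fun j _ => sum_cond_total (lam j) j x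
  -- evaluate the j-sum
  have hupd_i : ∀ h : (x i : ℕ) < M, (upd x i i : Fin (M+1)) = ⟨(x i : ℕ)+1, by omega⟩ := by
    intro h; simp [upd, Function.update_self, h]
  have hji : (if ((x i : ℕ) < M ∧ upd x i i = b) then lam i else 0)
      = if (b : ℕ) = (x i : ℕ) + 1 then lam i else 0 := by
    by_cases h : (b : ℕ) = (x i : ℕ) + 1
    · have hlt : (x i : ℕ) < M := by have := b.isLt; omega
      rw [if_pos h, if_pos ⟨hlt, by rw [hupd_i hlt]; exact (Fin.ext h.symm)⟩]
    · rw [if_neg h, if_neg]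
      rintro ⟨hlt, heq⟩
      apply h
      rw [← heq, hupd_i hlt]
  have hupd_ne : ∀ j : Fin n, j ≠ i → upd x j i = x i := by
    intro j hj; simp [upd, Function.update_of_ne (Ne.symm hj)]
  have hjsum : (∑ j : Fin n, if ((x j : ℕ) < M ∧ upd x j i = b) then lam j else 0)
      = (if (b : ℕ) = (x i : ℕ) + 1 then lam i else 0)
        + ∑ j ∈ Finset.univ.erase i,
            (if ((x j : ℕ) < M ∧ x i = b) then lam j else 0) := by
    rw [← Finset.add_sum_erase _ _ (Finset.mem_univ i), hji]
    congr 1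
    refine Finset.sum_congr rfl fun j hj => ?_
    have hj' : j ≠ i := (Finset.mem_erase.mp hj).1
    rw [hupd_ne j hj']
  rw [step1, step2, step3, hjsum]
  rcases eq_or_ne (x i) b with hib | hib
  · subst hib
    rw [Qbar_diag, if_pos rfl]
    have e1 : (if ((x i : ℕ)) = (x i : ℕ) + 1 then lam i else 0) = (0:ℝ) := by
      rw [if_neg]; omega
    have e2 : ∑ j ∈ Finset.univ.erase i,
        (if ((x j : ℕ) < M ∧ x i = x i) then lam j else 0)
        = (∑ j : Fin n, if (x j : ℕ) < M then lam j else 0)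
          - (if (x i : ℕ) < M then lam i else 0) := by
      simp only [and_true]
      rw [Finset.sum_erase_eq_sub (Finset.mem_univ i)]
    have hmu : (if x i = 0 ∧ x ≠ (fun _ => 0) then mu else 0)
        - (if x ≠ (fun _ => 0) then mu else 0)
        = -(if x i ≠ 0 then mu else 0) := by
      rcases eq_or_ne (x i) 0 with h0 | h0
      · simp [h0]
      · have hx0 : x ≠ (fun _ => 0) := by
          intro hh; apply h0; rw [hh]
        simp [h0, hx0]
    rw [e1, e2]
    linarith [hmu]
  · have hQbar : Qbar M (lam i) mu (x i) b
        = (if (b : ℕ) = (x i : ℕ) + 1 then lam i else 0)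
          + (if b = 0 ∧ x i ≠ 0 then mu else 0) := by
      unfold Qbar QbarOff
      rw [if_neg hib]
    have herase0 : ∑ j ∈ Finset.univ.erase i,
        (if ((x j : ℕ) < M ∧ x i = b) then lam j else 0) = 0 := by
      apply Finset.sum_eq_zero
      intro j hj
      rw [if_neg]
      rintro ⟨-, h⟩; exact hib h
    have hmu2 : (if b = 0 ∧ x ≠ (fun _ => 0) then mu else 0)
        = (if b = 0 ∧ x i ≠ 0 then mu else 0) := by
      rcases eq_or_ne b 0 with hb0 | hb0
      · subst hb0
        have hxi0 : x i ≠ 0 := fun h => hib h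
        have hx0 : x ≠ (fun _ => 0) := fun hh => hxi0 (by rw [hh])
        simp [hxi0, hx0]
      · simp [hb0]
    rw [hQbar, herase0, hmu2, if_neg hib]
    ring

lemma Pmat_apply {n M : ℕ} (lam : Fin n → ℝ) (mu qhat : ℝ) (x y : Fin n → Fin (M+1)) :
    Pmat n M lam mu qhat x y
      = (if x = y then 1 else 0) + qhat⁻¹ * Qgen n M lam mu x y := by
  simp [Pmat, Matrix.add_apply, Matrix.one_apply, Matrix.smul_apply, smul_eq_mul]

lemma PbarMat_apply {M : ℕ} (l mu qhat : ℝ) (a b : Fin (M+1)) :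
    PbarMat M l mu qhat a b
      = (if a = b then 1 else 0) + qhat⁻¹ * Qbar M l mu a b := by
  simp [PbarMat, Matrix.add_apply, Matrix.one_apply, Matrix.smul_apply, smul_eq_mul]

lemma Pmat_fiber_sum {n M : ℕ} (lam : Fin n → ℝ) (mu qhat : ℝ) (i : Fin n)
    (x : Fin n → Fin (M+1)) (b : Fin (M+1)) :
    ∑ y ∈ Finset.univ.filter (fun y : Fin n → Fin (M+1) => y i = b),
      Pmat n M lam mu qhat x y = PbarMat M (lam i) mu qhat (x i) b := by
  simp_rw [Pmat_apply]
  rw [Finset.sum_add_distrib, ← Finset.mul_sum, Qgen_fiber_sum, PbarMat_apply]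
  congr 1
  rw [Finset.sum_ite_eq (Finset.univ.filter (fun y : Fin n → Fin (M+1) => y i = b))
    x (fun _ => (1:ℝ))]
  simp [Finset.mem_filter]

lemma Qoff_nonneg {n M : ℕ} {lam : Fin n → ℝ} {mu : ℝ}
    (hlam : ∀ j, 0 ≤ lam j) (hmu : 0 ≤ mu) (x y : Fin n → Fin (M+1)) :
    0 ≤ Qoff n M lam mu x y := by
  unfold Qoff
  have h1 : (0:ℝ) ≤ ∑ j : Fin n,
      if (y j : ℕ) = (x j : ℕ) + 1 ∧ (∀ k, k ≠ j → y k = x k) then lam j else 0 := by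
    apply Finset.sum_nonneg
    intro j _
    split
    · exact hlam j
    · exact le_rfl
  have h2 : (0:ℝ) ≤ if y = (fun _ => 0) ∧ x ≠ (fun _ => 0) then mu else 0 := by
    split
    · exact hmu
    · exact le_rfl
  linarith

lemma Pmat_nonneg {n M : ℕ} {lam : Fin n → ℝ} {mu qhat : ℝ}
    (hlam : ∀ j, 0 ≤ lam j) (hmu : 0 ≤ mu) (hq : 0 < qhat)
    (hqbound : ∀ x : Fin n → Fin (M+1), -(Qgen n M lam mu x x) ≤ qhat)
    (x y : Fin n → Fin (M+1)) : 0 ≤ Pmat n M lam mu qhat x y := by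
  rw [Pmat_apply]
  rcases eq_or_ne x y with rfl | h
  · rw [if_pos rfl]
    have h1 : -(Qgen n M lam mu x x) ≤ qhat := hqbound x
    have h2 : -(1:ℝ) ≤ qhat⁻¹ * Qgen n M lam mu x x := by
      rw [neg_le, ← mul_neg]
      calc qhat⁻¹ * -(Qgen n M lam mu x x) ≤ qhat⁻¹ * qhat :=
            mul_le_mul_of_nonneg_left h1 (inv_nonneg.mpr hq.le)
        _ = 1 := inv_mul_cancel₀ (ne_of_gt hq)
    linarith
  · rw [if_neg h]
    have heq : Qgen n M lam mu x y = Qoff n M lam mu x y := by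
      unfold Qgen; rw [if_neg h]
    rw [heq, zero_add]
    exact mul_nonneg (inv_nonneg.mpr hq.le) (Qoff_nonneg hlam hmu x y)

lemma Pmat_row_sum {n M : ℕ} (lam : Fin n → ℝ) (mu : ℝ) {qhat : ℝ} (hq : qhat ≠ 0)
    (x : Fin n → Fin (M+1)) : ∑ y : Fin n → Fin (M+1), Pmat n M lam mu qhat x y = 1 := by
  simp_rw [Pmat_apply]
  rw [Finset.sum_add_distrib, ← Finset.mul_sum]
  have h1 : ∑ y : Fin n → Fin (M+1), (if x = y then (1:ℝ) else 0) = 1 := by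
    rw [Finset.sum_ite_eq Finset.univ x (fun _ => (1:ℝ))]; simp
  have h2 : ∑ y : Fin n → Fin (M+1), Qgen n M lam mu x y = 0 := by
    simp_rw [Qgen_eq]
    rw [Finset.sum_add_distrib]
    rw [Finset.sum_ite_eq Finset.univ x (fun _ => -(∑ z : Fin n → Fin (M+1), Qoff n M lam mu x z))]
    simp
  rw [h1, h2, mul_zero, add_zero]

/-- probability vector is preserved by vecMul with a stochastic matrix -/
lemma vecMul_pow_prob {n M : ℕ} {lam : Fin n → ℝ} {mu qhat : ℝ}
    (hlam : ∀ j, 0 ≤ lam j) (hmu : 0 ≤ mu) (hq : 0 < qhat)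
    (hqbound : ∀ x : Fin n → Fin (M+1), -(Qgen n M lam mu x x) ≤ qhat) (k : ℕ) :
    (∀ x, 0 ≤ Matrix.vecMul (delta0 n M) ((Pmat n M lam mu qhat) ^ k) x) ∧
    (∑ x : Fin n → Fin (M+1), Matrix.vecMul (delta0 n M) ((Pmat n M lam mu qhat) ^ k) x) = 1 := by
  induction k with
  | zero =>
    simp only [pow_zero, Matrix.vecMul_one]
    constructor
    · intro x; unfold delta0; split <;> norm_num
    · unfold delta0
      rw [Finset.sum_ite_eq' Finset.univ (fun _ => (0 : Fin (M+1))) (fun _ => (1:ℝ))]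
      simp
  | succ k ih =>
    have hrec : ∀ x, Matrix.vecMul (delta0 n M) ((Pmat n M lam mu qhat) ^ (k+1)) x
        = ∑ z : Fin n → Fin (M+1),
            Matrix.vecMul (delta0 n M) ((Pmat n M lam mu qhat) ^ k) z
              * Pmat n M lam mu qhat z x := by
      intro x
      rw [pow_succ, ← Matrix.vecMul_vecMul]
      rfl
    constructor
    · intro x
      rw [hrec]
      apply Finset.sum_nonneg
      intro z _
      exact mul_nonneg (ih.1 z) (Pmat_nonneg hlam hmu hq hqbound z x)
    · simp_rw [hrec]
      rw [Finset.sum_comm]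
      have : ∀ z : Fin n → Fin (M+1),
          ∑ x : Fin n → Fin (M+1),
            Matrix.vecMul (delta0 n M) ((Pmat n M lam mu qhat) ^ k) z
              * Pmat n M lam mu qhat z x
          = Matrix.vecMul (delta0 n M) ((Pmat n M lam mu qhat) ^ k) z := by
        intro z
        rw [← Finset.mul_sum, Pmat_row_sum lam mu (ne_of_gt hq), mul_one]
      simp_rw [this]
      exact ih.2

noncomputable def push (n M : ℕ) (i : Fin n) (v : (Fin n → Fin (M+1)) → ℝ) :
    Fin (M+1) → ℝ :=
  fun a => ∑ x ∈ Finset.univ.filter (fun x : Fin n → Fin (M+1) => x i = a), v x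

lemma push_vecMul {n M : ℕ} (lam : Fin n → ℝ) (mu qhat : ℝ) (i : Fin n)
    (v : (Fin n → Fin (M+1)) → ℝ) :
    push n M i (Matrix.vecMul v (Pmat n M lam mu qhat))
      = Matrix.vecMul (push n M i v) (PbarMat M (lam i) mu qhat) := by
  funext b
  have lhs : push n M i (Matrix.vecMul v (Pmat n M lam mu qhat)) b
      = ∑ y ∈ Finset.univ.filter (fun y : Fin n → Fin (M+1) => y i = b),
          Matrix.vecMul v (Pmat n M lam mu qhat) y := rfl
  have rhs : Matrix.vecMul (push n M i v) (PbarMat M (lam i) mu qhat) b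
      = ∑ a : Fin (M+1), push n M i v a * PbarMat M (lam i) mu qhat a b := rfl
  rw [lhs, rhs]
  have h1 : ∀ y, Matrix.vecMul v (Pmat n M lam mu qhat) y
      = ∑ x : Fin n → Fin (M+1), v x * Pmat n M lam mu qhat x y := fun y => rfl
  simp_rw [h1]
  rw [Finset.sum_comm]
  have h2 : ∀ x : Fin n → Fin (M+1),
      ∑ y ∈ Finset.univ.filter (fun y : Fin n → Fin (M+1) => y i = b),
        v x * Pmat n M lam mu qhat x y
      = v x * PbarMat M (lam i) mu qhat (x i) b := by
    intro x
    rw [← Finset.mul_sum, Pmat_fiber_sum]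
  simp_rw [h2]
  have hpush : ∀ a : Fin (M+1), push n M i v a
      = ∑ x ∈ Finset.univ.filter (fun x : Fin n → Fin (M+1) => x i = a), v x := fun a => rfl
  simp_rw [hpush]
  rw [← Finset.sum_fiberwise Finset.univ (fun x : Fin n → Fin (M+1) => x i)
    (fun x => v x * PbarMat M (lam i) mu qhat (x i) b)]
  refine Finset.sum_congr rfl fun a _ => ?_
  rw [Finset.sum_mul]
  refine Finset.sum_congr rfl fun x hx => ?_
  rw [(Finset.mem_filter.mp hx).2]

lemma push_delta0 {n M : ℕ} (hn : 1 ≤ n) (i : Fin n) :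
    push n M i (delta0 n M) = delta0bar M := by
  funext a
  unfold push delta0 delta0bar
  rw [Finset.sum_ite_eq' (Finset.univ.filter (fun x : Fin n → Fin (M+1) => x i = a))
    (fun _ => (0 : Fin (M+1))) (fun _ => (1:ℝ))]
  simp [Finset.mem_filter, eq_comm]

lemma push_pow {n M : ℕ} (hn : 1 ≤ n) (lam : Fin n → ℝ) (mu qhat : ℝ) (i : Fin n) (k : ℕ) :
    push n M i (Matrix.vecMul (delta0 n M) ((Pmat n M lam mu qhat) ^ k))
      = Matrix.vecMul (delta0bar M) ((PbarMat M (lam i) mu qhat) ^ k) := by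
  induction k with
  | zero => simp [push_delta0 hn i]
  | succ k ih =>
    rw [pow_succ, pow_succ, ← Matrix.vecMul_vecMul, ← Matrix.vecMul_vecMul,
      push_vecMul, ih]

lemma sum_f_eq_push {n M : ℕ} (i : Fin n) (f : Fin (M+1) → ℝ)
    (v : (Fin n → Fin (M+1)) → ℝ) :
    ∑ x : Fin n → Fin (M+1), f (x i) * v x = ∑ a : Fin (M+1), f a * push n M i v a := by
  unfold push
  rw [← Finset.sum_fiberwise Finset.univ (fun x : Fin n → Fin (M+1) => x i)
    (fun x => f (x i) * v x)]
  refine Finset.sum_congr rfl fun a _ => ?_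
  rw [Finset.mul_sum]
  refine Finset.sum_congr rfl fun x hx => ?_
  rw [(Finset.mem_filter.mp hx).2]

lemma summable_w {qhat t : ℝ} (ht : 0 ≤ qhat * t) (u : ℕ → ℝ) (hu : ∀ k, |u k| ≤ 1) :
    Summable (fun k : ℕ =>
      Real.exp (-(qhat * t)) * (qhat * t) ^ k / (Nat.factorial k) * u k) := by
  have hg : Summable (fun k : ℕ =>
      Real.exp (-(qhat * t)) * ((qhat * t) ^ k / (Nat.factorial k))) :=
    (Real.summable_pow_div_factorial (qhat * t)).mul_left _
  apply Summable.of_norm_bounded hg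
  intro k
  have h1 : (0:ℝ) ≤ Real.exp (-(qhat * t)) * ((qhat * t) ^ k / (Nat.factorial k)) := by
    positivity
  rw [Real.norm_eq_abs, abs_mul]
  have h2 : |Real.exp (-(qhat * t)) * (qhat * t) ^ k / (Nat.factorial k)|
      = Real.exp (-(qhat * t)) * ((qhat * t) ^ k / (Nat.factorial k)) := by
    rw [abs_of_nonneg (by positivity)]
    ring
  rw [h2]
  calc Real.exp (-(qhat * t)) * ((qhat * t) ^ k / (Nat.factorial k)) * |u k|
      ≤ Real.exp (-(qhat * t)) * ((qhat * t) ^ k / (Nat.factorial k)) * 1 := by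
        exact mul_le_mul_of_nonneg_left (hu k) h1
    _ = _ := by ring

lemma key_lumping {n M : ℕ} (hn : 1 ≤ n) {lam : Fin n → ℝ} {mu qhat : ℝ}
    (hlam : ∀ j, 0 ≤ lam j) (hmu : 0 ≤ mu) (hq : 0 < qhat)
    (hqbound : ∀ x : Fin n → Fin (M+1), -(Qgen n M lam mu x x) ≤ qhat)
    (i : Fin n) (f : Fin (M+1) → ℝ) {t : ℝ} (ht : 0 ≤ t) :
    ∑ x : Fin n → Fin (M+1), f (x i) * transientP n M lam mu qhat t x
      = ∑ a : Fin (M+1), f a * transientPbar M (lam i) mu qhat t a := by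
  have hqt : 0 ≤ qhat * t := mul_nonneg hq.le ht
  set w : ℕ → ℝ := fun k =>
    Real.exp (-(qhat * t)) * (qhat * t) ^ k / (Nat.factorial k) with hw
  set v : ℕ → (Fin n → Fin (M+1)) → ℝ := fun k x =>
    Matrix.vecMul (delta0 n M) ((Pmat n M lam mu qhat) ^ k) x with hv
  set vb : ℕ → Fin (M+1) → ℝ := fun k a =>
    Matrix.vecMul (delta0bar M) ((PbarMat M (lam i) mu qhat) ^ k) a with hvb
  have hprob := fun k => vecMul_pow_prob (M := M) hlam hmu hq hqbound k
  have hv1 : ∀ k x, |v k x| ≤ 1 := by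
    intro k x
    rw [abs_of_nonneg ((hprob k).1 x)]
    calc v k x ≤ ∑ z : Fin n → Fin (M+1), v k z :=
          Finset.single_le_sum (fun z _ => (hprob k).1 z) (Finset.mem_univ x)
      _ = 1 := (hprob k).2
  have hvb_push : ∀ k, vb k = push n M i (fun x => v k x) :=
    fun k => (push_pow hn lam mu qhat i k).symm
  have hvb1 : ∀ k a, |vb k a| ≤ 1 := by
    intro k a
    rw [hvb_push]
    have hnn : (0:ℝ) ≤ push n M i (fun x => v k x) a :=
      Finset.sum_nonneg fun x _ => (hprob k).1 x
    rw [abs_of_nonneg hnn]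
    calc push n M i (fun x => v k x) a
        ≤ ∑ x : Fin n → Fin (M+1), v k x :=
          Finset.sum_le_sum_of_subset_of_nonneg (Finset.filter_subset _ _)
            (fun x _ _ => (hprob k).1 x)
      _ = 1 := (hprob k).2
  have hTP : ∀ x, transientP n M lam mu qhat t x = ∑' k : ℕ, w k * v k x := by
    intro x
    unfold transientP
    refine tsum_congr fun k => ?_
    rw [hw]
  have hTPb : ∀ a, transientPbar M (lam i) mu qhat t a = ∑' k : ℕ, w k * vb k a := by
    intro a
    unfold transientPbar
    refine tsum_congr fun k => ?_
    rw [hw]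
  have hsummV : ∀ x, Summable (fun k => w k * v k x) := by
    intro x
    have := summable_w hqt (fun k => v k x) (fun k => hv1 k x)
    simpa [hw, mul_div_assoc] using this
  have hsummVb : ∀ a, Summable (fun k => w k * vb k a) := by
    intro a
    have := summable_w hqt (fun k => vb k a) (fun k => hvb1 k a)
    simpa [hw, mul_div_assoc] using this
  calc ∑ x : Fin n → Fin (M+1), f (x i) * transientP n M lam mu qhat t x
      = ∑ x : Fin n → Fin (M+1), ∑' k : ℕ, f (x i) * (w k * v k x) := by
        refine Finset.sum_congr rfl fun x _ => ?_
        rw [hTP, tsum_mul_left]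
    _ = ∑' k : ℕ, ∑ x : Fin n → Fin (M+1), f (x i) * (w k * v k x) := by
        rw [Summable.tsum_finsetSum]
        intro x _
        exact (hsummV x).mul_left _
    _ = ∑' k : ℕ, ∑ a : Fin (M+1), f a * (w k * vb k a) := by
        refine tsum_congr fun k => ?_
        have e1 : ∀ x : Fin n → Fin (M+1), f (x i) * (w k * v k x)
            = w k * (f (x i) * v k x) := fun x => by ring
        have e2 : ∀ a : Fin (M+1), f a * (w k * vb k a) = w k * (f a * vb k a) :=
          fun a => by ring
        simp_rw [e1, e2, ← Finset.mul_sum]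
        congr 1
        rw [sum_f_eq_push i f (fun x => v k x)]
        refine Finset.sum_congr rfl fun a _ => ?_
        rw [hvb_push]
    _ = ∑ a : Fin (M+1), ∑' k : ℕ, f a * (w k * vb k a) := by
        rw [← Summable.tsum_finsetSum]
        intro a _
        exact (hsummVb a).mul_left _
    _ = ∑ a : Fin (M+1), f a * transientPbar M (lam i) mu qhat t a := by
        refine Finset.sum_congr rfl fun a _ => ?_
        rw [hTPb, tsum_mul_left]

/-- For every `t ≥ 0`, the expected transient net reward of the
instructor computed in the original OEF chain equals the `c`-weighted sum of her
expected transient net rewards in the `n` lumped chains. Her net reward in state `x`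
is `∑ᵢ cᵢ (xᵢ·δ^{ln μ} − β)`. -/
theorem expected_transient_net_reward_instructor_eq (n M : ℕ) (hn : 1 ≤ n) (hM : 1 ≤ M)
    (lam : Fin n → ℝ) (hlam : ∀ j, 0 < lam j) (mu : ℝ) (hmu : 0 < mu)
    (qhat : ℝ) (hq : 0 < qhat)
    (hqbound : ∀ x : Fin n → Fin (M+1), -(Qgen n M lam mu x x) ≤ qhat)
    (beta : ℝ) (hbeta : 0 < beta ∧ beta < 1)
    (delta : ℝ) (hdelta : 0 < delta ∧ delta < 1)
    (c : Fin n → ℝ) (hc : ∀ i, 0 ≤ c i ∧ c i ≤ 1) (hcsum : ∑ i, c i = 1) :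
    ∀ t : ℝ, 0 ≤ t →
      ∑ x : Fin n → Fin (M+1),
          (∑ i, c i * (((x i : ℕ) : ℝ) * delta ^ Real.log mu - beta))
            * transientP n M lam mu qhat t x
        = ∑ i, c i *
            ∑ a : Fin (M+1),
              (((a : ℕ) : ℝ) * delta ^ Real.log mu - beta)
                * transientPbar M (lam i) mu qhat t a := by
  intro t ht
  simp_rw [Finset.sum_mul]
  rw [Finset.sum_comm]
  refine Finset.sum_congr rfl fun i _ => ?_
  have e1 : ∀ x : Fin n → Fin (M+1),
      c i * (((x i : ℕ) : ℝ) * delta ^ Real.log mu - beta) * transientP n M lam mu qhat t x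
      = c i * ((((x i : ℕ) : ℝ) * delta ^ Real.log mu - beta) * transientP n M lam mu qhat t x) :=
    fun x => by ring
  simp_rw [e1, ← Finset.mul_sum]
  congr 1
  exact key_lumping hn (fun j => (hlam j).le) hmu.le hq hqbound i
    (fun a => ((a : ℕ) : ℝ) * delta ^ Real.log mu - beta) ht
end

section
/- Fix a student i ∈ {1,…,n}. If Π : S → ℝ is a stationary distribution of the OEF CTMC (Π(x) ≥ 0 for all x, ∑_{x ∈ S} Π(x) = 1, and ∑_{x ∈ S} Π(x)·Q(x,y) = 0 for all y ∈ S), then the block-sum vector Π̄ᵢ defined by Π̄ᵢ(a) = ∑_{x ∈ S : x_i = a} Π(x) is a stationary distribution of the lumped chain: Π̄ᵢ(a) ≥ 0 for all a, ∑_{a=0}^{M} Π̄ᵢ(a) = 1, and ∑_{a=0}^{M} Π̄ᵢ(a)·Q̄ᵢ(a,b) = 0 for all b ∈ {0,…,M}. -/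
open scoped BigOperators

section Aux

variable (n M : ℕ) (lam : Fin n → ℝ) (mu : ℝ)

lemma Qgen_row_sum (x : Fin n → Fin (M+1)) : ∑ y, Qgen n M lam mu x y = 0 := by
  rw [← Finset.add_sum_erase Finset.univ _ (Finset.mem_univ x)]
  have h1 : Qgen n M lam mu x x = -∑ z ∈ Finset.univ.erase x, Qoff n M lam mu x z := by
    simp [Qgen]
  have h2 : ∑ y ∈ Finset.univ.erase x, Qgen n M lam mu x y
      = ∑ y ∈ Finset.univ.erase x, Qoff n M lam mu x y := by
    refine Finset.sum_congr rfl fun y hy => ?_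
    have hxy : x ≠ y := (Finset.ne_of_mem_erase hy).symm
    simp [Qgen, hxy]
  rw [h1, h2]; ring

lemma Qbar_row_sum (a : Fin (M+1)) (l m : ℝ) : ∑ c, Qbar M l m a c = 0 := by
  rw [← Finset.add_sum_erase Finset.univ _ (Finset.mem_univ a)]
  have h1 : Qbar M l m a a = -∑ c ∈ Finset.univ.erase a, QbarOff M l m a c := by
    simp [Qbar]
  have h2 : ∑ c ∈ Finset.univ.erase a, Qbar M l m a c
      = ∑ c ∈ Finset.univ.erase a, QbarOff M l m a c := by
    refine Finset.sum_congr rfl fun c hc => ?_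
    have hac : a ≠ c := (Finset.ne_of_mem_erase hc).symm
    simp [Qbar, hac]
  rw [h1, h2]; ring

lemma key_offdiag (i : Fin n) (x : Fin n → Fin (M+1)) (b : Fin (M+1)) (hb : b ≠ x i) :
    ∑ y ∈ Finset.univ.filter (fun y => y i = b), Qgen n M lam mu x y
      = Qbar M (lam i) mu (x i) b := by
  have hx : Qbar M (lam i) mu (x i) b = QbarOff M (lam i) mu (x i) b := by
    rw [Qbar, if_neg (Ne.symm hb)]
  have hQ : ∀ y ∈ Finset.univ.filter (fun y : Fin n → Fin (M+1) => y i = b),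
      Qgen n M lam mu x y = Qoff n M lam mu x y := by
    intro y hy
    have hyi : y i = b := (Finset.mem_filter.mp hy).2
    have hxy : x ≠ y := by
      intro h; apply hb; rw [← hyi, h]
    simp [Qgen, hxy]
  rw [Finset.sum_congr rfl hQ, hx]
  unfold Qoff
  rw [Finset.sum_add_distrib]
  have hmupart : (∑ y ∈ Finset.univ.filter (fun y : Fin n → Fin (M+1) => y i = b),
        (if y = (fun _ => 0) ∧ x ≠ (fun _ => 0) then mu else 0))
      = (if b = 0 ∧ x i ≠ 0 then mu else 0) := by
    have hrw : ∀ y : Fin n → Fin (M+1),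
        (if y = (fun _ => 0) ∧ x ≠ (fun _ => 0) then mu else 0)
        = (if y = (fun _ => 0) then (if x ≠ (fun _ => 0) then mu else 0) else 0) := by
      intro y; by_cases h1 : y = (fun _ => 0) <;> by_cases h2 : x ≠ (fun _ => 0) <;>
        simp [h1, h2]
    rw [Finset.sum_congr rfl (fun y _ => hrw y), Finset.sum_ite_eq']
    by_cases hb0 : b = 0
    · have hm : (fun _ : Fin n => (0 : Fin (M+1))) ∈
          Finset.univ.filter (fun y : Fin n → Fin (M+1) => y i = b) := by
        simp [hb0.symm]
      rw [if_pos hm]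
      have hxi : x i ≠ 0 := by rw [← hb0]; exact Ne.symm hb
      have hxne : x ≠ (fun _ => 0) := by
        intro h; apply hxi; rw [h]
      simp [hb0, hxi, hxne]
    · have hm : (fun _ : Fin n => (0 : Fin (M+1))) ∉
          Finset.univ.filter (fun y : Fin n → Fin (M+1) => y i = b) := by
        simp only [Finset.mem_filter, Finset.mem_univ, true_and]
        exact fun h => hb0 h.symm
      rw [if_neg hm]
      simp [hb0]
  have hlampart : (∑ y ∈ Finset.univ.filter (fun y : Fin n → Fin (M+1) => y i = b),
        ∑ j : Fin n,
          (if (y j : ℕ) = (x j : ℕ) + 1 ∧ (∀ k, k ≠ j → y k = x k) then lam j else 0))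
      = (if (b : ℕ) = (x i : ℕ) + 1 then lam i else 0) := by
    rw [Finset.sum_comm]
    rw [Finset.sum_eq_single i]
    · -- j = i case
      have hui : Function.update x i b i = b := Function.update_self i b x
      have hcond : ∀ y ∈ Finset.univ.filter (fun y : Fin n → Fin (M+1) => y i = b),
          (if (y i : ℕ) = (x i : ℕ) + 1 ∧ (∀ k, k ≠ i → y k = x k) then lam i else 0)
          = (if y = Function.update x i b then (if (b : ℕ) = (x i : ℕ) + 1 then lam i else 0) else 0) := by
        intro y hy
        have hyi : y i = b := (Finset.mem_filter.mp hy).2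
        by_cases hyu : y = Function.update x i b
        · rw [if_pos hyu]
          subst hyu
          have h2 : ∀ k, k ≠ i → Function.update x i b k = x k := by
            intro k hk; exact Function.update_of_ne hk _ _
          by_cases hc : (b : ℕ) = (x i : ℕ) + 1
          · rw [if_pos hc, if_pos ⟨by rw [hyi]; exact hc, h2⟩]
          · rw [if_neg hc, if_neg (fun h => hc (by rw [← hyi]; exact h.1))]
        · rw [if_neg hyu, if_neg]
          rintro ⟨-, h2⟩
          apply hyu
          funext k
          by_cases hk : k = i
          · subst hk; rw [hyi, hui]
          · rw [h2 k hk, Function.update_of_ne hk]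
      rw [Finset.sum_congr rfl hcond, Finset.sum_ite_eq']
      have hm : Function.update x i b ∈
          Finset.univ.filter (fun y : Fin n → Fin (M+1) => y i = b) := by
        simp [hui]
      rw [if_pos hm]
    · intro j _ hj
      refine Finset.sum_eq_zero fun y hy => ?_
      have hyi : y i = b := (Finset.mem_filter.mp hy).2
      rw [if_neg]
      rintro ⟨-, h2⟩
      exact hb (by rw [← hyi, h2 i (fun h => hj h.symm)])
    · intro h; exact absurd (Finset.mem_univ i) h
  rw [hlampart, hmupart]
  rfl

lemma key_lump (i : Fin n) (x : Fin n → Fin (M+1)) (b : Fin (M+1)) :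
    ∑ y ∈ Finset.univ.filter (fun y => y i = b), Qgen n M lam mu x y
      = Qbar M (lam i) mu (x i) b := by
  by_cases hb : b = x i
  · subst hb
    have h0 : ∑ c : Fin (M+1),
        ∑ y ∈ Finset.univ.filter (fun y : Fin n → Fin (M+1) => y i = c),
          Qgen n M lam mu x y = 0 := by
      rw [Finset.sum_fiberwise]
      exact Qgen_row_sum n M lam mu x
    rw [← Finset.add_sum_erase Finset.univ _ (Finset.mem_univ (x i))] at h0
    have h1 : ∑ c ∈ Finset.univ.erase (x i),
        ∑ y ∈ Finset.univ.filter (fun y : Fin n → Fin (M+1) => y i = c),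
          Qgen n M lam mu x y
        = ∑ c ∈ Finset.univ.erase (x i), Qbar M (lam i) mu (x i) c := by
      refine Finset.sum_congr rfl fun c hc => ?_
      exact key_offdiag n M lam mu i x c (Finset.ne_of_mem_erase hc)
    rw [h1] at h0
    have h2 : ∑ c : Fin (M+1), Qbar M (lam i) mu (x i) c = 0 :=
      Qbar_row_sum M (x i) (lam i) mu
    rw [← Finset.add_sum_erase Finset.univ _ (Finset.mem_univ (x i))] at h2
    linarith
  · exact key_offdiag n M lam mu i x b hb

end Aux

/-- If `Π` is a stationary distribution of the OEF CTMC, then the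
block-sum vector `Π̄ᵢ(a) = ∑_{x : xᵢ = a} Π(x)` is a stationary distribution of the
lumped chain of student `i`. -/
theorem stationary_dist_lumped_of_stationary (n M : ℕ) (hn : 1 ≤ n) (hM : 1 ≤ M)
    (lam : Fin n → ℝ) (hlam : ∀ j, 0 < lam j) (mu : ℝ) (hmu : 0 < mu)
    (i : Fin n)
    (Pi : (Fin n → Fin (M+1)) → ℝ)
    (hpos : ∀ x, 0 ≤ Pi x) (hsum : ∑ x, Pi x = 1)
    (hstat : ∀ y, ∑ x, Pi x * Qgen n M lam mu x y = 0) :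
    (∀ a : Fin (M+1), 0 ≤ ∑ x ∈ Finset.univ.filter (fun x => x i = a), Pi x)
    ∧ (∑ a : Fin (M+1), ∑ x ∈ Finset.univ.filter (fun x => x i = a), Pi x = 1)
    ∧ (∀ b : Fin (M+1),
        ∑ a : Fin (M+1),
          (∑ x ∈ Finset.univ.filter (fun x => x i = a), Pi x) * Qbar M (lam i) mu a b = 0) := by
  refine ⟨fun a => Finset.sum_nonneg fun x _ => hpos x, ?_, ?_⟩
  · rw [Finset.sum_fiberwise]; exact hsum
  · intro b
    have h1 : ∀ a : Fin (M+1),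
        (∑ x ∈ Finset.univ.filter (fun x => x i = a), Pi x) * Qbar M (lam i) mu a b
        = ∑ x ∈ Finset.univ.filter (fun x : Fin n → Fin (M+1) => x i = a),
            Pi x * Qbar M (lam i) mu (x i) b := by
      intro a
      rw [Finset.sum_mul]
      refine Finset.sum_congr rfl fun x hx => ?_
      rw [(Finset.mem_filter.mp hx).2]
    rw [Finset.sum_congr rfl (fun a _ => h1 a), Finset.sum_fiberwise]
    have h2 : ∀ x : Fin n → Fin (M+1),
        Pi x * Qbar M (lam i) mu (x i) b
        = ∑ y ∈ Finset.univ.filter (fun y : Fin n → Fin (M+1) => y i = b),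
            Pi x * Qgen n M lam mu x y := by
      intro x
      rw [← Finset.mul_sum, key_lump n M lam mu i x b]
    rw [Finset.sum_congr rfl (fun x _ => h2 x), Finset.sum_comm]
    exact Finset.sum_eq_zero fun y _ => hstat y
end

section
/- For every T ≥ 0: (a) the expected transient aggregate net reward of student i over [0,T] is the same whether computed in the original chain or in its lumped chain: ∫_0^T ∑_{x ∈ S} R^{l,i}(x)·π^t(x) dt = ∫_0^T ∑_{a=0}^{M} R̄^{l,i}(a)·π̄ᵢ^t(a) dt; (b) the expected transient aggregate net reward of the instructor over [0,T] in the original chain equals the c-weighted sum over the n lumped chains: ∫_0^T ∑_{x ∈ S} R^I(x)·π^t(x) dt = ∑_{i=1}^{n} c_i · ∫_0^T ∑_{a=0}^{M} (a·δ^{ln μ} − β)·π̄ᵢ^t(a) dt. -/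
open scoped BigOperators

section Lump

variable {n M : ℕ} {lam : Fin n → ℝ} {mu qhat : ℝ}

lemma qoff_self (x : Fin n → Fin (M+1)) : Qoff n M lam mu x x = 0 := by
  unfold Qoff
  rw [Finset.sum_eq_zero, if_neg, add_zero]
  · rintro ⟨h1, h2⟩; exact h2 h1
  · intro j _
    rw [if_neg]
    rintro ⟨h, -⟩
    omega

lemma qbaroff_self {l : ℝ} (a : Fin (M+1)) : QbarOff M l mu a a = 0 := by
  unfold QbarOff
  rw [if_neg (by omega), if_neg (by rintro ⟨rfl, h⟩; exact h rfl), add_zero]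

lemma sum_ite_qoff (i : Fin n) (x : Fin n → Fin (M+1)) (b : Fin (M+1)) (hb : b ≠ x i) :
    ∑ y : Fin n → Fin (M+1), (if y i = b then Qoff n M lam mu x y else 0)
      = QbarOff M (lam i) mu (x i) b := by
  have hsplit : ∀ y : Fin n → Fin (M+1),
      (if y i = b then Qoff n M lam mu x y else 0)
      = (∑ j : Fin n, if y i = b ∧ (y j : ℕ) = (x j : ℕ) + 1 ∧ (∀ k, k ≠ j → y k = x k)
            then lam j else 0)
        + (if y i = b ∧ y = (fun _ => 0) ∧ x ≠ (fun _ => 0) then mu else 0) := by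
    intro y
    by_cases hy : y i = b
    · simp only [hy, if_true, true_and, Qoff]
    · simp [hy]
  rw [Finset.sum_congr rfl fun y _ => hsplit y, Finset.sum_add_distrib, Finset.sum_comm]
  have h1 : ∀ j : Fin n,
      (∑ y : Fin n → Fin (M+1), if y i = b ∧ (y j : ℕ) = (x j : ℕ) + 1 ∧
          (∀ k, k ≠ j → y k = x k) then lam j else 0)
      = if j = i then (if (b : ℕ) = (x i : ℕ) + 1 then lam i else 0) else 0 := by
    intro j
    by_cases hji : j = i
    · subst hji
      rw [if_pos rfl, Finset.sum_eq_single (Function.update x j b)]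
      · by_cases hcond : (b : ℕ) = (x j : ℕ) + 1
        · rw [if_pos, if_pos hcond]
          refine ⟨Function.update_self j b x, by rw [Function.update_self]; exact hcond,
            fun k hk => Function.update_of_ne hk b x⟩
        · rw [if_neg, if_neg hcond]
          rintro ⟨h1, h2, -⟩
          rw [Function.update_self] at h2; exact hcond h2
      · intro y _ hy
        rw [if_neg]
        rintro ⟨hyi, hyj, hyk⟩
        apply hy
        funext k
        by_cases hk : k = j
        · subst hk; rw [Function.update_self, hyi]
        · rw [Function.update_of_ne hk, hyk k hk]
      · intro h; exact absurd (Finset.mem_univ _) h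
    · rw [Finset.sum_eq_zero, if_neg hji]
      intro y _
      rw [if_neg]
      rintro ⟨hyi, -, hyk⟩
      exact hb (hyi.symm.trans (hyk i fun h => hji h.symm))
  have h2 : (∑ y : Fin n → Fin (M+1),
      if y i = b ∧ (y = fun _ => 0) ∧ x ≠ (fun _ => 0) then mu else 0)
      = if b = 0 ∧ (x i ≠ 0) then mu else 0 := by
    rw [Finset.sum_eq_single (fun _ => (0 : Fin (M+1)))]
    · by_cases hb0 : b = 0
      · subst hb0
        have hxi : x i ≠ 0 := fun h => hb h.symm
        have hx : x ≠ (fun _ => 0) := fun h => hxi (by rw [h])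
        rw [if_pos ⟨rfl, rfl, hx⟩, if_pos ⟨rfl, hxi⟩]
      · rw [if_neg, if_neg]
        · rintro ⟨h, -⟩; exact hb0 h
        · rintro ⟨h, -, -⟩; exact hb0 h.symm
    · intro y _ hy
      rw [if_neg]
      rintro ⟨-, h, -⟩; exact hy h
    · intro h; exact absurd (Finset.mem_univ _) h
  rw [Finset.sum_congr rfl fun j _ => h1 j, h2,
    Finset.sum_ite_eq' Finset.univ i
      (fun _ => if (b : ℕ) = (x i : ℕ) + 1 then lam i else 0),
    if_pos (Finset.mem_univ i)]
  rfl

lemma sum_qoff_fiber (i : Fin n) (x : Fin n → Fin (M+1)) :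
    ∑ y : Fin n → Fin (M+1), Qoff n M lam mu x y
      = ∑ b : Fin (M+1), ∑ y : Fin n → Fin (M+1),
          (if y i = b then Qoff n M lam mu x y else 0) := by
  rw [Finset.sum_comm]
  refine Finset.sum_congr rfl fun y _ => ?_
  rw [Finset.sum_ite_eq Finset.univ (y i) (fun _ => Qoff n M lam mu x y),
    if_pos (Finset.mem_univ _)]

lemma sum_ite_qgen (i : Fin n) (x : Fin n → Fin (M+1)) (b : Fin (M+1)) :
    ∑ y : Fin n → Fin (M+1), (if y i = b then Qgen n M lam mu x y else 0)
      = Qbar M (lam i) mu (x i) b := by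
  by_cases hbx : b = x i
  · subst hbx
    have hsplit : ∀ y : Fin n → Fin (M+1),
        (if y i = x i then Qgen n M lam mu x y else 0)
        = (if y i = x i then Qoff n M lam mu x y else 0)
          + (if y = x then Qgen n M lam mu x x - Qoff n M lam mu x x else 0) := by
      intro y
      by_cases hy : y = x
      · subst hy; simp
      · rw [if_neg hy, add_zero]
        by_cases hyi : y i = x i
        · rw [if_pos hyi, if_pos hyi, Qgen, if_neg (fun h => hy h.symm)]
        · rw [if_neg hyi, if_neg hyi]
    rw [Finset.sum_congr rfl fun y _ => hsplit y, Finset.sum_add_distrib,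
      Finset.sum_ite_eq' Finset.univ x
        (fun _ => Qgen n M lam mu x x - Qoff n M lam mu x x),
      if_pos (Finset.mem_univ _)]
    have hA : ∑ y : Fin n → Fin (M+1), Qoff n M lam mu x y
        = (∑ y : Fin n → Fin (M+1), (if y i = x i then Qoff n M lam mu x y else 0))
          + ∑ c ∈ Finset.univ.erase (x i), QbarOff M (lam i) mu (x i) c := by
      rw [sum_qoff_fiber i x, ← Finset.add_sum_erase Finset.univ _ (Finset.mem_univ (x i))]
      congr 1
      refine Finset.sum_congr rfl fun c hc => ?_
      exact sum_ite_qoff i x c (Finset.ne_of_mem_erase hc)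
    have hgen : Qgen n M lam mu x x
        = -∑ z ∈ Finset.univ.erase x, Qoff n M lam mu x z := by
      rw [Qgen, if_pos rfl]
    have herase : ∑ z ∈ Finset.univ.erase x, Qoff n M lam mu x z
        = ∑ y : Fin n → Fin (M+1), Qoff n M lam mu x y := by
      rw [← Finset.add_sum_erase Finset.univ _ (Finset.mem_univ x), qoff_self, zero_add]
    rw [hgen, herase, qoff_self, Qbar, if_pos rfl]
    linarith [hA]
  · have h1 : ∀ y : Fin n → Fin (M+1),
        (if y i = b then Qgen n M lam mu x y else 0)
        = (if y i = b then Qoff n M lam mu x y else 0) := by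
      intro y
      by_cases hyi : y i = b
      · rw [if_pos hyi, if_pos hyi, Qgen,
          if_neg (fun h => hbx ((congrFun h i).trans hyi).symm)]
      · rw [if_neg hyi, if_neg hyi]
    rw [Finset.sum_congr rfl fun y _ => h1 y,
      sum_ite_qoff i x b hbx, Qbar, if_neg (fun h => hbx h.symm)]

lemma sum_ite_P (i : Fin n) (x : Fin n → Fin (M+1)) (b : Fin (M+1)) :
    ∑ y : Fin n → Fin (M+1), (if y i = b then Pmat n M lam mu qhat x y else 0)
      = PbarMat M (lam i) mu qhat (x i) b := by
  have hsplit : ∀ y : Fin n → Fin (M+1),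
      (if y i = b then Pmat n M lam mu qhat x y else 0)
      = (if y i = b then (if x = y then (1:ℝ) else 0) else 0)
        + qhat⁻¹ * (if y i = b then Qgen n M lam mu x y else 0) := by
    intro y
    by_cases hy : y i = b
    · simp [hy, Pmat, Matrix.add_apply, Matrix.smul_apply, Matrix.one_apply]
    · simp [hy]
  rw [Finset.sum_congr rfl fun y _ => hsplit y, Finset.sum_add_distrib,
    ← Finset.mul_sum, sum_ite_qgen i x b]
  have h1 : ∑ y : Fin n → Fin (M+1), (if y i = b then (if x = y then (1:ℝ) else 0) else 0)
      = if x i = b then (1:ℝ) else 0 := by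
    rw [Finset.sum_eq_single x]
    · rw [if_pos rfl]
    · intro y _ hy
      by_cases hyi : y i = b
      · rw [if_pos hyi, if_neg (fun h => hy h.symm)]
      · rw [if_neg hyi]
    · intro h; exact absurd (Finset.mem_univ _) h
  rw [h1]
  simp [PbarMat, Matrix.add_apply, Matrix.smul_apply, Matrix.one_apply]

lemma lump_vecMul (i : Fin n) (k : ℕ) (b : Fin (M+1)) :
    ∑ y : Fin n → Fin (M+1),
      (if y i = b then Matrix.vecMul (delta0 n M) (Pmat n M lam mu qhat ^ k) y else 0)
    = Matrix.vecMul (delta0bar M) (PbarMat M (lam i) mu qhat ^ k) b := by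
  induction k generalizing b with
  | zero =>
    simp only [pow_zero, Matrix.vecMul_one]
    rw [Finset.sum_eq_single (fun _ => (0 : Fin (M+1)))]
    · by_cases hb : b = 0
      · subst hb; simp [delta0, delta0bar]
      · rw [if_neg, delta0bar, if_neg hb]
        exact fun h => hb h.symm
    · intro y _ hy
      simp [delta0, hy]
    · simp
  | succ k ih =>
    rw [pow_succ, pow_succ, ← Matrix.vecMul_vecMul, ← Matrix.vecMul_vecMul]
    set w := Matrix.vecMul (delta0 n M) (Pmat n M lam mu qhat ^ k) with hw
    set wb := Matrix.vecMul (delta0bar M) (PbarMat M (lam i) mu qhat ^ k) with hwb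
    calc ∑ y : Fin n → Fin (M+1),
          (if y i = b then Matrix.vecMul w (Pmat n M lam mu qhat) y else 0)
        = ∑ y : Fin n → Fin (M+1), ∑ x : Fin n → Fin (M+1),
            (if y i = b then w x * Pmat n M lam mu qhat x y else 0) := by
          refine Finset.sum_congr rfl fun y _ => ?_
          by_cases hy : y i = b
          · simp only [hy, if_true, Matrix.vecMul, dotProduct]
          · simp [hy]
      _ = ∑ x : Fin n → Fin (M+1), w x *
            ∑ y : Fin n → Fin (M+1), (if y i = b then Pmat n M lam mu qhat x y else 0) := by
          rw [Finset.sum_comm]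
          refine Finset.sum_congr rfl fun x _ => ?_
          rw [Finset.mul_sum]
          refine Finset.sum_congr rfl fun y _ => ?_
          by_cases hy : y i = b <;> simp [hy]
      _ = ∑ x : Fin n → Fin (M+1), w x * PbarMat M (lam i) mu qhat (x i) b := by
          refine Finset.sum_congr rfl fun x _ => ?_
          rw [sum_ite_P i x b]
      _ = ∑ a : Fin (M+1), (∑ x : Fin n → Fin (M+1), if x i = a then w x else 0)
            * PbarMat M (lam i) mu qhat a b := by
          have : ∀ x : Fin n → Fin (M+1), w x * PbarMat M (lam i) mu qhat (x i) b
              = ∑ a : Fin (M+1), (if x i = a then w x * PbarMat M (lam i) mu qhat a b else 0) := by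
            intro x
            rw [Finset.sum_ite_eq Finset.univ (x i)
              (fun a => w x * PbarMat M (lam i) mu qhat a b), if_pos (Finset.mem_univ _)]
          rw [Finset.sum_congr rfl fun x _ => this x, Finset.sum_comm]
          refine Finset.sum_congr rfl fun a _ => ?_
          rw [Finset.sum_mul]
          refine Finset.sum_congr rfl fun x _ => ?_
          by_cases hx : x i = a <;> simp [hx]
      _ = ∑ a : Fin (M+1), wb a * PbarMat M (lam i) mu qhat a b := by
          refine Finset.sum_congr rfl fun a _ => ?_
          rw [ih a]
      _ = Matrix.vecMul wb (PbarMat M (lam i) mu qhat) b := rfl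

lemma lump_sum_f (i : Fin n) (f : Fin (M+1) → ℝ) (k : ℕ) :
    ∑ x : Fin n → Fin (M+1),
        f (x i) * Matrix.vecMul (delta0 n M) (Pmat n M lam mu qhat ^ k) x
    = ∑ a : Fin (M+1),
        f a * Matrix.vecMul (delta0bar M) (PbarMat M (lam i) mu qhat ^ k) a := by
  set w := Matrix.vecMul (delta0 n M) (Pmat n M lam mu qhat ^ k) with hw
  have h1 : ∀ x : Fin n → Fin (M+1), f (x i) * w x
      = ∑ a : Fin (M+1), (if x i = a then f a * w x else 0) := by
    intro x
    rw [Finset.sum_ite_eq Finset.univ (x i) (fun a => f a * w x), if_pos (Finset.mem_univ _)]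
  rw [Finset.sum_congr rfl fun x _ => h1 x, Finset.sum_comm]
  refine Finset.sum_congr rfl fun a _ => ?_
  rw [← lump_vecMul i k a, Finset.mul_sum]
  refine Finset.sum_congr rfl fun x _ => ?_
  by_cases hx : x i = a
  · subst hx; simp [hw]
  · simp [hx]

lemma qoff_nonneg (hlam : ∀ j, 0 < lam j) (hmu : 0 < mu) (x y : Fin n → Fin (M+1)) :
    0 ≤ Qoff n M lam mu x y := by
  unfold Qoff
  have h1 : (0:ℝ) ≤ ∑ j : Fin n,
      if (y j : ℕ) = (x j : ℕ) + 1 ∧ (∀ k, k ≠ j → y k = x k) then lam j else 0 := by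
    refine Finset.sum_nonneg fun j _ => ?_
    split
    · exact (hlam j).le
    · exact le_refl 0
  have h2 : (0:ℝ) ≤ if y = (fun _ => 0) ∧ x ≠ (fun _ => 0) then mu else 0 := by
    split
    · exact hmu.le
    · exact le_refl 0
  linarith

lemma qgen_row_sum (x : Fin n → Fin (M+1)) :
    ∑ y : Fin n → Fin (M+1), Qgen n M lam mu x y = 0 := by
  rw [← Finset.add_sum_erase Finset.univ _ (Finset.mem_univ x)]
  have h1 : Qgen n M lam mu x x = -∑ z ∈ Finset.univ.erase x, Qoff n M lam mu x z := by
    rw [Qgen, if_pos rfl]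
  have h2 : ∑ y ∈ Finset.univ.erase x, Qgen n M lam mu x y
      = ∑ y ∈ Finset.univ.erase x, Qoff n M lam mu x y := by
    refine Finset.sum_congr rfl fun y hy => ?_
    rw [Qgen, if_neg (fun h => (Finset.ne_of_mem_erase hy) h.symm)]
  rw [h1, h2, neg_add_cancel]

lemma P_row_sum (hq : qhat ≠ 0) (x : Fin n → Fin (M+1)) :
    ∑ y : Fin n → Fin (M+1), Pmat n M lam mu qhat x y = 1 := by
  simp only [Pmat, Matrix.add_apply, Matrix.smul_apply, Matrix.of_apply, smul_eq_mul,
    Matrix.one_apply]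
  rw [Finset.sum_add_distrib, ← Finset.mul_sum, qgen_row_sum, mul_zero, add_zero,
    Finset.sum_ite_eq Finset.univ x (fun _ => (1:ℝ)), if_pos (Finset.mem_univ x)]

lemma P_nonneg (hlam : ∀ j, 0 < lam j) (hmu : 0 < mu) (hq : 0 < qhat)
    (hqbound : ∀ x : Fin n → Fin (M+1), -(Qgen n M lam mu x x) ≤ qhat)
    (x y : Fin n → Fin (M+1)) : 0 ≤ Pmat n M lam mu qhat x y := by
  simp only [Pmat, Matrix.add_apply, Matrix.smul_apply, Matrix.of_apply, smul_eq_mul,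
    Matrix.one_apply]
  by_cases hxy : x = y
  · rw [if_pos hxy, ← hxy]
    have h1 : -(Qgen n M lam mu x x) ≤ qhat := hqbound x
    have h2 : 0 ≤ qhat⁻¹ * (Qgen n M lam mu x x + qhat) :=
      mul_nonneg (inv_nonneg.mpr hq.le) (by linarith)
    have h3 : qhat⁻¹ * qhat = 1 := inv_mul_cancel₀ hq.ne'
    rw [mul_add] at h2
    linarith
  · rw [if_neg hxy, zero_add, Qgen, if_neg hxy]
    exact mul_nonneg (inv_nonneg.mpr hq.le) (qoff_nonneg hlam hmu x y)

lemma vec_nonneg (hlam : ∀ j, 0 < lam j) (hmu : 0 < mu) (hq : 0 < qhat)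
    (hqbound : ∀ x : Fin n → Fin (M+1), -(Qgen n M lam mu x x) ≤ qhat)
    (k : ℕ) (x : Fin n → Fin (M+1)) :
    0 ≤ Matrix.vecMul (delta0 n M) (Pmat n M lam mu qhat ^ k) x := by
  induction k generalizing x with
  | zero =>
    simp only [pow_zero, Matrix.vecMul_one, delta0]
    split
    · exact zero_le_one
    · exact le_refl 0
  | succ k ih =>
    rw [pow_succ, ← Matrix.vecMul_vecMul]
    have : Matrix.vecMul (Matrix.vecMul (delta0 n M) (Pmat n M lam mu qhat ^ k))
        (Pmat n M lam mu qhat) x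
        = ∑ z : Fin n → Fin (M+1),
            Matrix.vecMul (delta0 n M) (Pmat n M lam mu qhat ^ k) z
              * Pmat n M lam mu qhat z x := rfl
    rw [this]
    exact Finset.sum_nonneg fun z _ =>
      mul_nonneg (ih z) (P_nonneg hlam hmu hq hqbound z x)

lemma vec_sum_one (hq : qhat ≠ 0) (k : ℕ) :
    ∑ x : Fin n → Fin (M+1),
      Matrix.vecMul (delta0 n M) (Pmat n M lam mu qhat ^ k) x = 1 := by
  induction k with
  | zero =>
    simp only [pow_zero, Matrix.vecMul_one, delta0]
    rw [Finset.sum_ite_eq' Finset.univ (fun _ => (0 : Fin (M+1))) (fun _ => (1:ℝ)),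
      if_pos (Finset.mem_univ _)]
  | succ k ih =>
    rw [pow_succ]
    have h0 : ∀ x : Fin n → Fin (M+1),
        Matrix.vecMul (delta0 n M) (Pmat n M lam mu qhat ^ k * Pmat n M lam mu qhat) x
        = ∑ z : Fin n → Fin (M+1),
            Matrix.vecMul (delta0 n M) (Pmat n M lam mu qhat ^ k) z
              * Pmat n M lam mu qhat z x := by
      intro x
      rw [← Matrix.vecMul_vecMul]
      rfl
    rw [Finset.sum_congr rfl fun x _ => h0 x, Finset.sum_comm]
    have h1 : ∀ z : Fin n → Fin (M+1),
        ∑ x : Fin n → Fin (M+1),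
          Matrix.vecMul (delta0 n M) (Pmat n M lam mu qhat ^ k) z
            * Pmat n M lam mu qhat z x
        = Matrix.vecMul (delta0 n M) (Pmat n M lam mu qhat ^ k) z := by
      intro z
      rw [← Finset.mul_sum, P_row_sum hq, mul_one]
    rw [Finset.sum_congr rfl fun z _ => h1 z, ih]

lemma vec_le_one (hlam : ∀ j, 0 < lam j) (hmu : 0 < mu) (hq : 0 < qhat)
    (hqbound : ∀ x : Fin n → Fin (M+1), -(Qgen n M lam mu x x) ≤ qhat)
    (k : ℕ) (x : Fin n → Fin (M+1)) :
    Matrix.vecMul (delta0 n M) (Pmat n M lam mu qhat ^ k) x ≤ 1 := by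
  have h := vec_sum_one (n := n) (M := M) (lam := lam) (mu := mu) (qhat := qhat) hq.ne' k
  have h2 : Matrix.vecMul (delta0 n M) (Pmat n M lam mu qhat ^ k) x
      ≤ ∑ z : Fin n → Fin (M+1),
          Matrix.vecMul (delta0 n M) (Pmat n M lam mu qhat ^ k) z :=
    Finset.single_le_sum (fun z _ => vec_nonneg hlam hmu hq hqbound k z) (Finset.mem_univ x)
  linarith

lemma vecbar_abs_le_one (hlam : ∀ j, 0 < lam j) (hmu : 0 < mu) (hq : 0 < qhat)
    (hqbound : ∀ x : Fin n → Fin (M+1), -(Qgen n M lam mu x x) ≤ qhat)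
    (i : Fin n) (k : ℕ) (a : Fin (M+1)) :
    |Matrix.vecMul (delta0bar M) (PbarMat M (lam i) mu qhat ^ k) a| ≤ 1 := by
  rw [← lump_vecMul i k a, abs_le]
  constructor
  · refine le_trans (by norm_num) (Finset.sum_nonneg fun y _ => ?_)
    split
    · exact vec_nonneg hlam hmu hq hqbound k y
    · exact le_refl 0
  · calc (∑ y : Fin n → Fin (M+1),
          if y i = a then Matrix.vecMul (delta0 n M) (Pmat n M lam mu qhat ^ k) y else 0)
        ≤ ∑ y : Fin n → Fin (M+1),
            Matrix.vecMul (delta0 n M) (Pmat n M lam mu qhat ^ k) y := by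
          refine Finset.sum_le_sum fun y _ => ?_
          split
          · exact le_refl _
          · exact vec_nonneg hlam hmu hq hqbound k y
      _ = 1 := vec_sum_one hq.ne' k

lemma vec_abs_le_one (hlam : ∀ j, 0 < lam j) (hmu : 0 < mu) (hq : 0 < qhat)
    (hqbound : ∀ x : Fin n → Fin (M+1), -(Qgen n M lam mu x x) ≤ qhat)
    (k : ℕ) (x : Fin n → Fin (M+1)) :
    |Matrix.vecMul (delta0 n M) (Pmat n M lam mu qhat ^ k) x| ≤ 1 := by
  rw [abs_le]
  exact ⟨le_trans (by norm_num) (vec_nonneg hlam hmu hq hqbound k x),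
    vec_le_one hlam hmu hq hqbound k x⟩

lemma coeff_summable (q t : ℝ) (v : ℕ → ℝ) (hv : ∀ k, |v k| ≤ 1) :
    Summable (fun k : ℕ =>
      Real.exp (-(q*t)) * (q*t)^k / (Nat.factorial k) * v k) := by
  refine Summable.of_norm_bounded
    (g := fun k => Real.exp (-(q*t)) * (|q*t|^k / (Nat.factorial k))) ?_ ?_
  · exact (Real.summable_pow_div_factorial (|q*t|)).mul_left _
  · intro k
    rw [Real.norm_eq_abs, abs_mul, abs_div, abs_mul, abs_pow, Nat.abs_cast,
      abs_of_pos (Real.exp_pos _)]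
    calc Real.exp (-(q*t)) * |q*t|^k / (Nat.factorial k) * |v k|
        ≤ Real.exp (-(q*t)) * |q*t|^k / (Nat.factorial k) * 1 := by
          refine mul_le_mul_of_nonneg_left (hv k) ?_
          positivity
      _ = Real.exp (-(q*t)) * (|q*t|^k / (Nat.factorial k)) := by ring

lemma core_eq (hlam : ∀ j, 0 < lam j) (hmu : 0 < mu) (hq : 0 < qhat)
    (hqbound : ∀ x : Fin n → Fin (M+1), -(Qgen n M lam mu x x) ≤ qhat)
    (i : Fin n) (f : Fin (M+1) → ℝ) (t : ℝ) :
    ∑ x : Fin n → Fin (M+1), f (x i) * transientP n M lam mu qhat t x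
    = ∑ a : Fin (M+1), f a * transientPbar M (lam i) mu qhat t a := by
  have hsum1 : ∀ x : Fin n → Fin (M+1), Summable (fun k : ℕ =>
      Real.exp (-(qhat*t)) * (qhat*t)^k / (Nat.factorial k)
        * Matrix.vecMul (delta0 n M) (Pmat n M lam mu qhat ^ k) x) :=
    fun x => coeff_summable qhat t _ (fun k => vec_abs_le_one hlam hmu hq hqbound k x)
  have hsum2 : ∀ a : Fin (M+1), Summable (fun k : ℕ =>
      Real.exp (-(qhat*t)) * (qhat*t)^k / (Nat.factorial k)
        * Matrix.vecMul (delta0bar M) (PbarMat M (lam i) mu qhat ^ k) a) :=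
    fun a => coeff_summable qhat t _ (fun k => vecbar_abs_le_one hlam hmu hq hqbound i k a)
  calc ∑ x : Fin n → Fin (M+1), f (x i) * transientP n M lam mu qhat t x
      = ∑ x : Fin n → Fin (M+1), ∑' k : ℕ, f (x i) *
          (Real.exp (-(qhat*t)) * (qhat*t)^k / (Nat.factorial k)
            * Matrix.vecMul (delta0 n M) (Pmat n M lam mu qhat ^ k) x) := by
        refine Finset.sum_congr rfl fun x _ => ?_
        rw [transientP, ← tsum_mul_left]
    _ = ∑' k : ℕ, ∑ x : Fin n → Fin (M+1), f (x i) *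
          (Real.exp (-(qhat*t)) * (qhat*t)^k / (Nat.factorial k)
            * Matrix.vecMul (delta0 n M) (Pmat n M lam mu qhat ^ k) x) :=
        (Summable.tsum_finsetSum fun x _ => (hsum1 x).mul_left _).symm
    _ = ∑' k : ℕ, ∑ a : Fin (M+1), f a *
          (Real.exp (-(qhat*t)) * (qhat*t)^k / (Nat.factorial k)
            * Matrix.vecMul (delta0bar M) (PbarMat M (lam i) mu qhat ^ k) a) := by
        refine tsum_congr fun k => ?_
        simp only [← mul_assoc]
        exact lump_sum_f i
          (fun a => f a * (Real.exp (-(qhat*t)) * (qhat*t)^k / (Nat.factorial k))) k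
    _ = ∑ a : Fin (M+1), ∑' k : ℕ, f a *
          (Real.exp (-(qhat*t)) * (qhat*t)^k / (Nat.factorial k)
            * Matrix.vecMul (delta0bar M) (PbarMat M (lam i) mu qhat ^ k) a) :=
        Summable.tsum_finsetSum fun a _ => (hsum2 a).mul_left _
    _ = ∑ a : Fin (M+1), f a * transientPbar M (lam i) mu qhat t a := by
        refine Finset.sum_congr rfl fun a _ => ?_
        rw [transientPbar, tsum_mul_left]

lemma transientPbar_integrable {l : ℝ} (hq : 0 < qhat)
    (hb : ∀ k a, |Matrix.vecMul (delta0bar M) (PbarMat M l mu qhat ^ k) a| ≤ 1)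
    (g : Fin (M+1) → ℝ) (T : ℝ) (hT : 0 ≤ T) :
    IntervalIntegrable (fun t => ∑ a : Fin (M+1), g a * transientPbar M l mu qhat t a)
      MeasureTheory.volume 0 T := by
  apply ContinuousOn.intervalIntegrable
  refine continuousOn_finset_sum Finset.univ fun a _ => ?_
  refine ContinuousOn.mul continuousOn_const ?_
  have hIcc : Set.uIcc (0:ℝ) T = Set.Icc 0 T := Set.uIcc_of_le hT
  rw [hIcc]
  have : (fun t => transientPbar M l mu qhat t a)
      = fun t => ∑' k : ℕ, Real.exp (-(qhat * t)) * (qhat * t) ^ k / (Nat.factorial k) *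
          Matrix.vecMul (delta0bar M) (PbarMat M l mu qhat ^ k) a := rfl
  rw [this]
  refine continuousOn_tsum (u := fun k => (qhat * T)^k / (Nat.factorial k))
    (fun k => Continuous.continuousOn (by fun_prop)) ?_ ?_
  · exact Real.summable_pow_div_factorial _
  · intro k t ht
    obtain ⟨ht0, htT⟩ := ht
    have hqt : 0 ≤ qhat * t := mul_nonneg hq.le ht0
    have hqT : qhat * t ≤ qhat * T := mul_le_mul_of_nonneg_left htT hq.le
    have hexp : Real.exp (-(qhat * t)) ≤ 1 := Real.exp_le_one_iff.mpr (by linarith)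
    rw [Real.norm_eq_abs, abs_mul, abs_div, abs_mul, abs_pow, Nat.abs_cast,
      abs_of_pos (Real.exp_pos _), abs_of_nonneg hqt]
    calc Real.exp (-(qhat * t)) * (qhat * t) ^ k / (Nat.factorial k) *
          |Matrix.vecMul (delta0bar M) (PbarMat M l mu qhat ^ k) a|
        ≤ 1 * (qhat * T) ^ k / (Nat.factorial k) * 1 := by
          have hpow : (qhat*t)^k ≤ (qhat*T)^k := pow_le_pow_left₀ hqt hqT k
          have hfac : (0:ℝ) < (Nat.factorial k) := by positivity
          refine mul_le_mul ?_ (hb k a) (abs_nonneg _) (by positivity)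
          exact (div_le_div_iff_of_pos_right hfac).mpr (mul_le_mul hexp hpow (by positivity) zero_le_one)
      _ = (qhat * T) ^ k / (Nat.factorial k) := by ring

end Lump

/-- For every `T ≥ 0`: (a) the expected transient aggregate net
reward of student `i` over `[0,T]` is the same in the original OEF chain and in its
lumped chain; (b) the instructor's expected transient aggregate net reward over
`[0,T]` in the original chain equals the `c`-weighted sum over the `n` lumped chains. -/
theorem expected_transient_aggregate_net_rewards_eq (n M : ℕ) (hn : 1 ≤ n) (hM : 1 ≤ M)
    (lam : Fin n → ℝ) (hlam : ∀ j, 0 < lam j) (mu : ℝ) (hmu : 0 < mu)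
    (qhat : ℝ) (hq : 0 < qhat)
    (hqbound : ∀ x : Fin n → Fin (M+1), -(Qgen n M lam mu x x) ≤ qhat)
    (i : Fin n) (alpha : ℝ) (halpha : 0 < alpha ∧ alpha < 1)
    (m : ℕ) (hm : 1 ≤ m ∧ m ≤ M)
    (beta : ℝ) (hbeta : 0 < beta ∧ beta < 1)
    (delta : ℝ) (hdelta : 0 < delta ∧ delta < 1)
    (c : Fin n → ℝ) (hc : ∀ j, 0 ≤ c j ∧ c j ≤ 1) (hcsum : ∑ j, c j = 1) :
    ∀ T : ℝ, 0 ≤ T →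
      ((∫ t in (0:ℝ)..T,
          ∑ x : Fin n → Fin (M+1),
            (((min (x i : ℕ) m : ℕ) : ℝ) * delta ^ Real.log mu - alpha * ((x i : ℕ) : ℝ))
              * transientP n M lam mu qhat t x)
        = ∫ t in (0:ℝ)..T,
            ∑ a : Fin (M+1),
              (((min (a : ℕ) m : ℕ) : ℝ) * delta ^ Real.log mu - alpha * ((a : ℕ) : ℝ))
                * transientPbar M (lam i) mu qhat t a)
      ∧
      ((∫ t in (0:ℝ)..T,
          ∑ x : Fin n → Fin (M+1),
            (∑ j, c j * (((x j : ℕ) : ℝ) * delta ^ Real.log mu - beta))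
              * transientP n M lam mu qhat t x)
        = ∑ j, c j *
            ∫ t in (0:ℝ)..T,
              ∑ a : Fin (M+1),
                (((a : ℕ) : ℝ) * delta ^ Real.log mu - beta)
                  * transientPbar M (lam j) mu qhat t a) := by
  intro T hT
  constructor
  · refine intervalIntegral.integral_congr fun t _ => ?_
    exact core_eq hlam hmu hq hqbound i
      (fun a => ((min (a : ℕ) m : ℕ) : ℝ) * delta ^ Real.log mu - alpha * ((a : ℕ) : ℝ)) t
  · have hbb : ∀ (j : Fin n) (k : ℕ) (a : Fin (M+1)),
        |Matrix.vecMul (delta0bar M) (PbarMat M (lam j) mu qhat ^ k) a| ≤ 1 :=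
      fun j k a => vecbar_abs_le_one hlam hmu hq hqbound j k a
    have hint : ∀ j : Fin n, IntervalIntegrable
        (fun t => ∑ a : Fin (M+1),
          (((a:ℕ):ℝ) * delta ^ Real.log mu - beta) * transientPbar M (lam j) mu qhat t a)
        MeasureTheory.volume 0 T :=
      fun j => transientPbar_integrable hq (hbb j) _ T hT
    have hpt : ∀ t : ℝ,
        (∑ x : Fin n → Fin (M+1),
          (∑ j, c j * (((x j : ℕ) : ℝ) * delta ^ Real.log mu - beta))
            * transientP n M lam mu qhat t x)
        = ∑ j, c j * (∑ a : Fin (M+1),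
            (((a:ℕ):ℝ) * delta ^ Real.log mu - beta) * transientPbar M (lam j) mu qhat t a) := by
      intro t
      have h1 : ∀ x : Fin n → Fin (M+1),
          (∑ j, c j * (((x j : ℕ) : ℝ) * delta ^ Real.log mu - beta))
            * transientP n M lam mu qhat t x
          = ∑ j, (c j * (((x j : ℕ) : ℝ) * delta ^ Real.log mu - beta))
              * transientP n M lam mu qhat t x :=
        fun x => Finset.sum_mul _ _ _
      rw [Finset.sum_congr rfl fun x _ => h1 x, Finset.sum_comm]
      refine Finset.sum_congr rfl fun j _ => ?_
      calc ∑ x : Fin n → Fin (M+1),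
            (c j * (((x j : ℕ) : ℝ) * delta ^ Real.log mu - beta))
              * transientP n M lam mu qhat t x
          = ∑ a : Fin (M+1), (c j * (((a:ℕ):ℝ) * delta ^ Real.log mu - beta))
              * transientPbar M (lam j) mu qhat t a :=
            core_eq hlam hmu hq hqbound j
              (fun a => c j * (((a:ℕ):ℝ) * delta ^ Real.log mu - beta)) t
        _ = c j * ∑ a : Fin (M+1),
              (((a:ℕ):ℝ) * delta ^ Real.log mu - beta) * transientPbar M (lam j) mu qhat t a := by
            rw [Finset.mul_sum]
            exact Finset.sum_congr rfl fun a _ => mul_assoc _ _ _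
    calc (∫ t in (0:ℝ)..T,
          ∑ x : Fin n → Fin (M+1),
            (∑ j, c j * (((x j : ℕ) : ℝ) * delta ^ Real.log mu - beta))
              * transientP n M lam mu qhat t x)
        = ∫ t in (0:ℝ)..T, ∑ j, c j * (∑ a : Fin (M+1),
            (((a:ℕ):ℝ) * delta ^ Real.log mu - beta) * transientPbar M (lam j) mu qhat t a) :=
          intervalIntegral.integral_congr fun t _ => hpt t
      _ = ∑ j, ∫ t in (0:ℝ)..T, c j * (∑ a : Fin (M+1),
            (((a:ℕ):ℝ) * delta ^ Real.log mu - beta) * transientPbar M (lam j) mu qhat t a) :=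
          intervalIntegral.integral_finset_sum (fun j _ => (hint j).const_mul (c j))
      _ = ∑ j, c j * ∫ t in (0:ℝ)..T, ∑ a : Fin (M+1),
            (((a:ℕ):ℝ) * delta ^ Real.log mu - beta) * transientPbar M (lam j) mu qhat t a :=
          Finset.sum_congr rfl fun j _ => intervalIntegral.integral_const_mul (c j) _
end
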